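/- Let ε ∈ (0,1/10) and α ∈ ℝ. Then the Lebesgue measure of the set {ξ ∈ ℝ : |ξ² - α| < 2ε} is at most C√ε if |α| < 10ε, and at most C ε/√|α| if |α| ≥ 10ε, for a universal constant C. -/

import Mathlib

open MeasureTheory Real

/-- Slice-measure estimate for an `ε`-neighborhood of the parabola: for `ε ∈ (0,1/10)` and
`α ∈ ℝ`, the measure of `{ξ : |ξ² - α| < 2ε}` is at most `C√ε` if `|α| < 10ε` and at most
`Cε/√|α|` if `|α| ≥ 10ε`. -/
theorem stmt6 :
    ∃ C : ℝ, 0 < C ∧ ∀ ε α : ℝ, 0 < ε → ε < 1/10 →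
      ((|α| < 10 * ε →
          volume {ξ : ℝ | |ξ ^ 2 - α| < 2 * ε} ≤ ENNReal.ofReal (C * Real.sqrt ε)) ∧
       (10 * ε ≤ |α| →
          volume {ξ : ℝ | |ξ ^ 2 - α| < 2 * ε} ≤ ENNReal.ofReal (C * ε / Real.sqrt |α|))) := by
  refine ⟨8, by norm_num, fun ε α hε hε' => ⟨fun hα => ?_, fun hα => ?_⟩⟩
  · -- |α| < 10ε
    have hsub : {ξ : ℝ | |ξ ^ 2 - α| < 2 * ε} ⊆
        Set.Ioo (-Real.sqrt (12 * ε)) (Real.sqrt (12 * ε)) := by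
      intro ξ hξ
      simp only [Set.mem_setOf_eq] at hξ
      obtain ⟨h1, h2⟩ := abs_lt.1 hξ
      obtain ⟨h3, h4⟩ := abs_lt.1 hα
      have hlt : ξ ^ 2 < 12 * ε := by nlinarith
      have habs : |ξ| < Real.sqrt (12 * ε) := by
        rw [← Real.sqrt_sq_eq_abs]
        exact Real.sqrt_lt_sqrt (sq_nonneg _) hlt
      exact abs_lt.1 habs
    refine le_trans (measure_mono hsub) ?_
    rw [Real.volume_Ioo]
    apply ENNReal.ofReal_le_ofReal
    have h12 : Real.sqrt (12 * ε) ≤ 4 * Real.sqrt ε := by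
      nlinarith [Real.sq_sqrt (by positivity : (0:ℝ) ≤ 12 * ε),
        Real.sq_sqrt hε.le, Real.sqrt_nonneg (12 * ε), Real.sqrt_nonneg ε]
    linarith
  · -- 10ε ≤ |α|
    rcases le_or_gt α 0 with h0 | h0
    · have hempty : {ξ : ℝ | |ξ ^ 2 - α| < 2 * ε} = ∅ := by
        ext ξ
        simp only [Set.mem_setOf_eq, Set.mem_empty_iff_false, iff_false, not_lt]
        have hαa : |α| = -α := abs_of_nonpos h0
        rw [hαa] at hα
        calc 2 * ε ≤ ξ ^ 2 - α := by nlinarith [sq_nonneg ξ]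
          _ ≤ |ξ ^ 2 - α| := le_abs_self _
      rw [hempty, measure_empty]
      exact zero_le
    · have hαa : |α| = α := abs_of_pos h0
      rw [hαa] at hα ⊢
      set a := Real.sqrt (α - 2 * ε) with ha
      set b := Real.sqrt (α + 2 * ε) with hb
      have hae : a ^ 2 = α - 2 * ε := Real.sq_sqrt (by linarith)
      have hbe : b ^ 2 = α + 2 * ε := Real.sq_sqrt (by linarith)
      have ha0 : 0 ≤ a := Real.sqrt_nonneg _
      have hb0 : 0 ≤ b := Real.sqrt_nonneg _
      have hab : a ≤ b := Real.sqrt_le_sqrt (by linarith)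
      have hsab : Real.sqrt α ≤ b := Real.sqrt_le_sqrt (by linarith)
      have hsa0 : 0 < Real.sqrt α := Real.sqrt_pos.2 h0
      have hsub : {ξ : ℝ | |ξ ^ 2 - α| < 2 * ε} ⊆
          Set.Ioo (-b) (-a) ∪ Set.Ioo a b := by
        intro ξ hξ
        simp only [Set.mem_setOf_eq] at hξ
        obtain ⟨h1, h2⟩ := abs_lt.1 hξ
        have hub : |ξ| < b := by
          rw [← Real.sqrt_sq_eq_abs, hb]
          exact Real.sqrt_lt_sqrt (sq_nonneg _) (by linarith)
        have hlb : a < |ξ| := by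
          rw [← Real.sqrt_sq_eq_abs, ha]
          exact Real.sqrt_lt_sqrt (by linarith) (by linarith)
        rcases le_or_gt 0 ξ with hs | hs
        · right
          rw [abs_of_nonneg hs] at hub hlb
          exact ⟨hlb, hub⟩
        · left
          rw [abs_of_neg hs] at hub hlb
          exact ⟨by linarith, by linarith⟩
      refine le_trans (measure_mono hsub) (le_trans (measure_union_le _ _) ?_)
      rw [Real.volume_Ioo, Real.volume_Ioo, ← ENNReal.ofReal_add (by linarith) (by linarith)]
      apply ENNReal.ofReal_le_ofReal
      rw [le_div_iff₀ hsa0]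
      have h4 : (b - a) * (b + a) = 4 * ε := by nlinarith
      have key : (b - a) * Real.sqrt α ≤ 4 * ε := by nlinarith
      nlinarith
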